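/- Let P be an orthogonal projection matrix on ℝⁿ, R an n×q matrix with Rᵀ P R invertible, y ∈ ℝⁿ, σ² > 0, and define θ̂ = (Rᵀ P R)⁻¹ Rᵀ P y. Then the Gaussian integral over ℝ^q satisfies ∫ exp{−‖P(y − Rθ)‖²/(2σ²)} dθ = (2πσ²)^{q/2} |Rᵀ P R|^{−1/2} exp{−‖P(y − Rθ̂)‖²/(2σ²)}. In particular the integral is finite. -/

import Mathlib

open Matrix MeasureTheory Real

-- symmetric matrix moves across dot product
lemma dot_symm {m : ℕ} (M : Matrix (Fin m) (Fin m) ℝ) (hM : Mᵀ = M)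
    (a b : Fin m → ℝ) : (M *ᵥ a) ⬝ᵥ b = a ⬝ᵥ (M *ᵥ b) := by
  conv_lhs => rw [← hM, Matrix.mulVec_transpose]
  rw [← Matrix.dotProduct_mulVec]

-- Gaussian integral on pi space
lemma gauss_pi (q : ℕ) (σ2 : ℝ) (hσ2 : 0 < σ2) :
    Integrable (fun x : Fin q → ℝ => Real.exp (-(x ⬝ᵥ x) / (2 * σ2))) ∧
    (∫ x : Fin q → ℝ, Real.exp (-(x ⬝ᵥ x) / (2 * σ2))) = (2 * π * σ2) ^ ((q : ℝ) / 2) := by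
  have hb : 0 < (2 * σ2)⁻¹ := by positivity
  have hfun : ∀ x : Fin q → ℝ, Real.exp (-(x ⬝ᵥ x) / (2 * σ2))
      = ∏ i, Real.exp (-(2 * σ2)⁻¹ * (x i) ^ 2) := by
    intro x
    rw [← Real.exp_sum]
    congr 1
    rw [dotProduct, neg_div, div_eq_inv_mul, Finset.mul_sum]
    rw [show ∑ i, (-(2 * σ2)⁻¹ * (x i) ^ 2) = -∑ i, ((2 * σ2)⁻¹ * (x i) ^ 2) by
      rw [← Finset.sum_neg_distrib]
      exact Finset.sum_congr rfl fun i _ => by ring]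
    congr 1
    exact Finset.sum_congr rfl fun i _ => by ring
  constructor
  · rw [show (fun x : Fin q → ℝ => Real.exp (-(x ⬝ᵥ x) / (2 * σ2)))
        = fun x : Fin q → ℝ => ∏ i, Real.exp (-(2 * σ2)⁻¹ * (x i) ^ 2) from funext hfun]
    exact Integrable.fintype_prod (fun _ => integrable_exp_neg_mul_sq hb)
  · rw [show (fun x : Fin q → ℝ => Real.exp (-(x ⬝ᵥ x) / (2 * σ2)))
        = fun x : Fin q → ℝ => ∏ i, Real.exp (-(2 * σ2)⁻¹ * (x i) ^ 2) from funext hfun]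
    rw [volume_pi, integral_fintype_prod_eq_pow (fun t : ℝ => Real.exp (-(2 * σ2)⁻¹ * t ^ 2)),
      integral_gaussian, Fintype.card_fin]
    have h1 : π / (2 * σ2)⁻¹ = 2 * π * σ2 := by field_simp
    rw [h1, Real.sqrt_eq_rpow, ← Real.rpow_natCast ((2 * π * σ2) ^ ((1:ℝ)/2)) q,
      ← Real.rpow_mul (by positivity)]
    norm_num
    ring_nf

-- change of variables by an invertible matrix
lemma comp_mulVec {q : ℕ} (M : Matrix (Fin q) (Fin q) ℝ) (hM : M.det ≠ 0)
    (f : (Fin q → ℝ) → ℝ) (hf : Integrable f) :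
    Integrable (fun x : Fin q → ℝ => f (M *ᵥ x)) ∧
    (∫ x : Fin q → ℝ, f (M *ᵥ x)) = |M.det|⁻¹ * ∫ x, f x := by
  have hmap := Real.map_matrix_volume_pi_eq_smul_volume_pi hM
  have hTmeas : Measurable (Matrix.toLin' M) :=
    (Matrix.toLin' M).continuous_of_finiteDimensional.measurable
  have hfm : AEStronglyMeasurable f (Measure.map (Matrix.toLin' M) volume) := by
    rw [hmap]
    exact hf.aestronglyMeasurable.smul_measure _
  have hint : Integrable f (Measure.map (Matrix.toLin' M) volume) := by
    rw [hmap]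
    exact hf.smul_measure ENNReal.ofReal_ne_top
  have happ : ∀ x, Matrix.toLin' M x = M *ᵥ x := fun x => Matrix.toLin'_apply M x
  constructor
  · have := (integrable_map_measure hfm hTmeas.aemeasurable).mp hint
    simpa [Function.comp_def, happ] using this
  · calc (∫ x : Fin q → ℝ, f (M *ᵥ x)) = ∫ x, f (Matrix.toLin' M x) := by simp [happ]
    _ = ∫ z, f z ∂(Measure.map (Matrix.toLin' M) volume) :=
        (integral_map hTmeas.aemeasurable hfm).symm
    _ = |M.det|⁻¹ * ∫ x, f x := by
        rw [hmap, integral_smul_measure, ENNReal.toReal_ofReal (by positivity), smul_eq_mul, abs_inv]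

theorem stmt2 (n q : ℕ) (P : Matrix (Fin n) (Fin n) ℝ)
    (hPsymm : Pᵀ = P) (hPidem : P * P = P)
    (R : Matrix (Fin n) (Fin q) ℝ) (hinv : IsUnit (Rᵀ * P * R))
    (y : Fin n → ℝ) (σ2 : ℝ) (hσ2 : 0 < σ2)
    (θhat : Fin q → ℝ) (hθhat : θhat = (Rᵀ * P * R)⁻¹ *ᵥ (Rᵀ *ᵥ (P *ᵥ y))) :
    (∫ θ : Fin q → ℝ,
        Real.exp (-((P *ᵥ (y - R *ᵥ θ)) ⬝ᵥ (P *ᵥ (y - R *ᵥ θ))) / (2 * σ2))) =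
      (2 * π * σ2) ^ ((q : ℝ) / 2) * (Rᵀ * P * R).det ^ (-(1 : ℝ) / 2) *
        Real.exp (-((P *ᵥ (y - R *ᵥ θhat)) ⬝ᵥ (P *ᵥ (y - R *ᵥ θhat))) / (2 * σ2)) ∧
    Integrable (fun θ : Fin q → ℝ =>
        Real.exp (-((P *ᵥ (y - R *ᵥ θ)) ⬝ᵥ (P *ᵥ (y - R *ᵥ θ))) / (2 * σ2))) := by
  set A : Matrix (Fin q) (Fin q) ℝ := Rᵀ * P * R with hA
  have hAsymm : Aᵀ = A := by
    rw [hA, Matrix.transpose_mul, Matrix.transpose_mul, Matrix.transpose_transpose, hPsymm,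
      Matrix.mul_assoc]
  have hAunit : IsUnit A.det := (Matrix.isUnit_iff_isUnit_det A).mp hinv
  have hAinv : A * A⁻¹ = 1 := Matrix.mul_nonsing_inv A hAunit
  have hAinv' : A⁻¹ * A = 1 := Matrix.nonsing_inv_mul A hAunit
  have hPP : ∀ a b : Fin n → ℝ, (P *ᵥ a) ⬝ᵥ (P *ᵥ b) = a ⬝ᵥ (P *ᵥ b) := by
    intro a b
    rw [dot_symm P hPsymm, Matrix.mulVec_mulVec, hPidem]
  have hAmul : ∀ x : Fin q → ℝ, A *ᵥ x = Rᵀ *ᵥ (P *ᵥ (R *ᵥ x)) := by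
    intro x; rw [hA, ← Matrix.mulVec_mulVec, ← Matrix.mulVec_mulVec]
  have hquadA : ∀ x : Fin q → ℝ,
      x ⬝ᵥ (A *ᵥ x) = (P *ᵥ (R *ᵥ x)) ⬝ᵥ (P *ᵥ (R *ᵥ x)) := by
    intro x
    rw [hAmul, Matrix.dotProduct_mulVec, Matrix.vecMul_transpose, ← hPP]
  have hApd : A.PosDef := by
    refine Matrix.posDef_iff_dotProduct_mulVec.mpr ⟨?_, fun x hx => ?_⟩
    · ext i j
      simpa using congrFun (congrFun hAsymm i) j
    · rw [star_trivial]
      have h0 : 0 ≤ x ⬝ᵥ (A *ᵥ x) := by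
        rw [hquadA]
        exact Finset.sum_nonneg fun i _ => mul_self_nonneg _
      rcases h0.lt_or_eq with h | h
      · exact h
      · exfalso
        have hz : P *ᵥ (R *ᵥ x) = 0 := by
          have h2 : (P *ᵥ (R *ᵥ x)) ⬝ᵥ (P *ᵥ (R *ᵥ x)) = 0 := by
            rw [← hquadA]; exact h.symm
          exact dotProduct_self_eq_zero.mp h2
        have hAx : A *ᵥ x = 0 := by rw [hAmul, hz, Matrix.mulVec_zero]
        have : x = 0 := by
          have h1 : A⁻¹ *ᵥ (A *ᵥ x) = x := by
            rw [Matrix.mulVec_mulVec, hAinv', Matrix.one_mulVec]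
          rw [hAx, Matrix.mulVec_zero] at h1
          exact h1.symm
        exact hx this
  have hApsd := hApd.posSemidef
  obtain ⟨S, hSpsd, hSS0⟩ : ∃ S : Matrix (Fin q) (Fin q) ℝ, S.PosSemidef ∧ S * S = A := by
    open scoped MatrixOrder in
    exact ⟨CFC.sqrt A, Matrix.nonneg_iff_posSemidef.mp (CFC.sqrt_nonneg A),
      CFC.sqrt_mul_sqrt_self A (Matrix.nonneg_iff_posSemidef.mpr hApsd)⟩
  have hSsymm : Sᵀ = S := by
    ext i j
    simpa using congrFun (congrFun hSpsd.isHermitian i) j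
  have hSS : S * S = A := hSS0
  have hdet : S.det * S.det = A.det := by rw [← Matrix.det_mul, hSS]
  have hAdetpos : 0 < A.det := hApd.det_pos
  have hSdetne : S.det ≠ 0 := by
    intro h
    rw [h, zero_mul] at hdet
    exact hAdetpos.ne' hdet.symm
  have habs : Real.sqrt A.det = |S.det| := by
    rw [← hdet, ← sq, Real.sqrt_sq_eq_abs]
  have hquadS : ∀ x : Fin q → ℝ, (S *ᵥ x) ⬝ᵥ (S *ᵥ x) = x ⬝ᵥ (A *ᵥ x) := by
    intro x; rw [dot_symm S hSsymm, Matrix.mulVec_mulVec, hSS]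
  -- normal equations
  have hNE : Rᵀ *ᵥ (P *ᵥ (y - R *ᵥ θhat)) = 0 := by
    have h1 : A *ᵥ θhat = Rᵀ *ᵥ (P *ᵥ y) := by
      rw [hθhat, Matrix.mulVec_mulVec, hAinv, Matrix.one_mulVec]
    rw [Matrix.mulVec_sub, Matrix.mulVec_sub, ← hAmul, h1, sub_self]
  -- quadratic decomposition
  set c0 : ℝ := (P *ᵥ (y - R *ᵥ θhat)) ⬝ᵥ (P *ᵥ (y - R *ᵥ θhat)) with hc0
  have hdecomp : ∀ θ : Fin q → ℝ,
      (P *ᵥ (y - R *ᵥ θ)) ⬝ᵥ (P *ᵥ (y - R *ᵥ θ))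
        = c0 + (S *ᵥ (θ - θhat)) ⬝ᵥ (S *ᵥ (θ - θhat)) := by
    intro θ
    have hyd : y - R *ᵥ θ = (y - R *ᵥ θhat) - R *ᵥ (θ - θhat) := by
      rw [Matrix.mulVec_sub]; abel
    rw [hyd, Matrix.mulVec_sub]
    set a := P *ᵥ (y - R *ᵥ θhat)
    set b := P *ᵥ (R *ᵥ (θ - θhat))
    have hcross : b ⬝ᵥ a = 0 := by
      rw [hPP]
      rw [show (R *ᵥ (θ - θhat)) ⬝ᵥ (P *ᵥ (y - R *ᵥ θhat))
          = (θ - θhat) ⬝ᵥ (Rᵀ *ᵥ (P *ᵥ (y - R *ᵥ θhat))) by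
        rw [← Matrix.vecMul_transpose R (θ - θhat), ← Matrix.dotProduct_mulVec]]
      rw [hNE, dotProduct_zero]
    have hcross' : a ⬝ᵥ b = 0 := by rw [dotProduct_comm]; exact hcross
    have hbb : b ⬝ᵥ b = (S *ᵥ (θ - θhat)) ⬝ᵥ (S *ᵥ (θ - θhat)) := by
      rw [hquadS, hquadA]
    rw [sub_dotProduct, dotProduct_sub, dotProduct_sub, hcross, hcross', hbb]
    ring
  -- the Gaussian pieces
  obtain ⟨hg_int, hg_val⟩ := gauss_pi q σ2 hσ2
  obtain ⟨hgS_int, hgS_val⟩ := comp_mulVec S hSdetne _ hg_int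
  set c : ℝ := Real.exp (-c0 / (2 * σ2)) with hc
  have hF : ∀ θ : Fin q → ℝ,
      Real.exp (-((P *ᵥ (y - R *ᵥ θ)) ⬝ᵥ (P *ᵥ (y - R *ᵥ θ))) / (2 * σ2))
        = c * Real.exp (-((S *ᵥ (θ - θhat)) ⬝ᵥ (S *ᵥ (θ - θhat))) / (2 * σ2)) := by
    intro θ
    rw [hdecomp θ, neg_add, add_div, Real.exp_add]
  have hInt : Integrable (fun θ : Fin q → ℝ =>
      Real.exp (-((P *ᵥ (y - R *ᵥ θ)) ⬝ᵥ (P *ᵥ (y - R *ᵥ θ))) / (2 * σ2))) := by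
    rw [show (fun θ : Fin q → ℝ =>
        Real.exp (-((P *ᵥ (y - R *ᵥ θ)) ⬝ᵥ (P *ᵥ (y - R *ᵥ θ))) / (2 * σ2)))
      = fun θ : Fin q → ℝ =>
        c * Real.exp (-((S *ᵥ (θ - θhat)) ⬝ᵥ (S *ᵥ (θ - θhat))) / (2 * σ2)) from funext hF]
    exact (hgS_int.comp_sub_right θhat).const_mul c
  refine ⟨?_, hInt⟩
  calc (∫ θ : Fin q → ℝ,
        Real.exp (-((P *ᵥ (y - R *ᵥ θ)) ⬝ᵥ (P *ᵥ (y - R *ᵥ θ))) / (2 * σ2)))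
      = ∫ θ : Fin q → ℝ,
        c * Real.exp (-((S *ᵥ (θ - θhat)) ⬝ᵥ (S *ᵥ (θ - θhat))) / (2 * σ2)) := by
        simp_rw [hF]
    _ = c * ∫ θ : Fin q → ℝ,
        Real.exp (-((S *ᵥ (θ - θhat)) ⬝ᵥ (S *ᵥ (θ - θhat))) / (2 * σ2)) :=
        integral_const_mul c _
    _ = c * ∫ u : Fin q → ℝ, Real.exp (-((S *ᵥ u) ⬝ᵥ (S *ᵥ u)) / (2 * σ2)) := by
        rw [integral_sub_right_eq_self
          (fun u : Fin q → ℝ => Real.exp (-((S *ᵥ u) ⬝ᵥ (S *ᵥ u)) / (2 * σ2))) θhat]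
    _ = c * (|S.det|⁻¹ * (2 * π * σ2) ^ ((q : ℝ) / 2)) := by rw [hgS_val, hg_val]
    _ = (2 * π * σ2) ^ ((q : ℝ) / 2) * A.det ^ (-(1 : ℝ) / 2) * c := by
        have : A.det ^ (-(1 : ℝ) / 2) = |S.det|⁻¹ := by
          rw [show (-(1 : ℝ) / 2) = -(1 / 2 : ℝ) by norm_num,
            Real.rpow_neg hAdetpos.le, ← Real.sqrt_eq_rpow, habs]
        rw [this]; ring
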